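/- Let t be a tensor reduced monoidal t-structure on a monoidal triangulated category T. Then H^i_t(𝟙) = 0 for all i ≠ 0, and hence the unit object 𝟙 lies in the heart H_t, with 𝟙 ≅ H^0_t(𝟙). -/

import Mathlib

open CategoryTheory Category Limits Pretriangulated Triangulated MonoidalCategory

namespace Paper

variable (C : Type*) [Category C] [Preadditive C] [HasZeroObject C] [HasShift C ℤ]
  [∀ n : ℤ, (shiftFunctor C n).Additive] [Pretriangulated C]

/-- Truncation and cohomology data for a t-structure `t`: the truncation functors
`τ^{≤ n}`, `τ^{≥ n}` together with the natural maps `τ^{≤ n} X ⟶ X ⟶ τ^{≥ n+1} X`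
and the connecting maps forming distinguished truncation triangles. -/
structure TruncData (t : TStructure C) where
  τle : ℤ → C ⥤ C
  τge : ℤ → C ⥤ C
  τle_mem (n : ℤ) (X : C) : t.le n ((τle n).obj X)
  τge_mem (n : ℤ) (X : C) : t.ge n ((τge n).obj X)
  ι (n : ℤ) : τle n ⟶ 𝟭 C
  π (n : ℤ) : 𝟭 C ⟶ τge n
  δ (n : ℤ) (X : C) : (τge (n + 1)).obj X ⟶ ((τle n).obj X)⟦(1 : ℤ)⟧
  triangle_mem (n : ℤ) (X : C) :
    Triangle.mk ((ι n).app X) ((π (n + 1)).app X) (δ n X) ∈ distTriang C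

variable {C}

/-- The cohomological functor `H^n_t := Σ^n ∘ τ^{≤ n} ∘ τ^{≥ n}`, valued in the heart. -/
def TruncData.H {t : TStructure C} (d : TruncData C t) (n : ℤ) : C ⥤ C :=
  d.τge n ⋙ d.τle n ⋙ shiftFunctor C n

/-- The heart `D^{≤ 0} ∩ D^{≥ 0}` of a t-structure. -/
def Heart (t : TStructure C) (X : C) : Prop := t.le 0 X ∧ t.ge 0 X

/-- A t-structure is bounded if every object lies in some `D^{≤ b} ∩ D^{≥ a}`. -/
def IsBounded (t : TStructure C) : Prop := ∀ X : C, ∃ a b : ℤ, t.le b X ∧ t.ge a X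


section Monoidal

variable (C) [MonoidalCategory C]

/-- A monoidal triangulated category: the tensor product is exact in each variable,
with compatibility isomorphisms `Σ(X) ⊗ Y ≅ Σ(X ⊗ Y)` and `X ⊗ Σ(Y) ≅ Σ(X ⊗ Y)`. -/
class MonoidalTriangulated where
  shiftTensor (n : ℤ) (X Y : C) : ((X⟦n⟧) ⊗ Y) ≅ ((X ⊗ Y)⟦n⟧)
  tensorShift (n : ℤ) (X Y : C) : (X ⊗ (Y⟦n⟧)) ≅ ((X ⊗ Y)⟦n⟧)
  whiskerLeft_distinguished (X : C) (T : Triangle C) (hT : T ∈ distTriang C) :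
    Triangle.mk (X ◁ T.mor₁) (X ◁ T.mor₂)
      ((X ◁ T.mor₃) ≫ (tensorShift 1 X T.obj₁).hom) ∈ distTriang C
  whiskerRight_distinguished (Y : C) (T : Triangle C) (hT : T ∈ distTriang C) :
    Triangle.mk (T.mor₁ ▷ Y) (T.mor₂ ▷ Y)
      ((T.mor₃ ▷ Y) ≫ (shiftTensor 1 T.obj₁ Y).hom) ∈ distTriang C

/-- The deviation of the `k`-shifted t-structure `Σ^{-k} t = (D^{≤ k}, D^{≥ k+1})`:
the set of integers `n` with `D^{≤ k} ⊗ D^{≤ k+n} ⊆ D^{≤ k}` and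
`D^{≥ k} ⊗ D^{≥ k+n} ⊆ D^{≥ k}`.  The deviation of `t` itself is `dev C t 0`. -/
def dev (t : TStructure C) (k : ℤ) : Set ℤ :=
  {n | (∀ X Y : C, t.le k X → t.le (k + n) Y → t.le k (X ⊗ Y)) ∧
       (∀ X Y : C, t.ge k X → t.ge (k + n) Y → t.ge k (X ⊗ Y))}

variable {C}

/-- The Künneth formula: `H^n(X ⊗ Y)` is the (bi)product `⊕_{p+q=n} H^p(X) ⊗ H^q(Y)`
(all but finitely many summands are zero, so the product is the coproduct). -/
def Kunneth {t : TStructure C} (d : TruncData C t) : Prop :=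
  ∀ (n : ℤ) (X Y : C),
    ∃ p : ∀ q : ℤ, ((d.H n).obj (X ⊗ Y)) ⟶ (((d.H q).obj X) ⊗ ((d.H (n - q)).obj Y)),
      Nonempty (IsLimit (Fan.mk ((d.H n).obj (X ⊗ Y)) p))

variable (C) in
/-- A monoidal additive category is tensor reduced if `X ⊗ X = 0` implies `X = 0`. -/
def TensorReducedCat : Prop := ∀ X : C, IsZero (X ⊗ X) → IsZero X

/-- A monoidal t-structure is tensor reduced if its heart is: for `X` in the heart,
`X ⊗ X = 0` implies `X = 0`. -/
def TensorReduced (t : TStructure C) : Prop :=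
  ∀ X : C, Heart t X → IsZero (X ⊗ X) → IsZero X

end Monoidal


section Aux

variable {C : Type*} [Category C] [Preadditive C] [HasZeroObject C] [HasShift C ℤ]
  [∀ n : ℤ, (shiftFunctor C n).Additive] [Pretriangulated C]
variable {t : TStructure C} (d : TruncData C t)

lemma tzero {X Y : C} {a b : ℤ} (f : X ⟶ Y) (hX : t.le a X) (hY : t.ge b Y)
    (hab : a < b) : f = 0 := by
  have h1 : t.le 0 (X⟦a⟧) := t.le_shift a a 0 (by omega) X hX
  have h2 : t.ge (b - a) (Y⟦a⟧) := t.ge_shift b a (b - a) (by omega) Y hY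
  have h3 : t.ge 1 (Y⟦a⟧) := t.ge_antitone (show (1 : ℤ) ≤ b - a by omega) _ h2
  have h4 := t.zero' (f⟦a⟧') h1 h3
  rwa [Functor.map_eq_zero_iff] at h4

lemma shift_isZero_iff (X : C) (n : ℤ) : IsZero (X⟦n⟧) ↔ IsZero X := by
  constructor
  · intro h
    exact IsZero.of_iso ((shiftFunctor C (-n)).map_isZero h) ((shiftEquiv C n).unitIso.app X)
  · intro h
    exact (shiftFunctor C n).map_isZero h

lemma isZero_tle_of_ι_zero (j : ℤ) (X : C) (h : (d.ι j).app X = 0) :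
    IsZero ((d.τle j).obj X) := by
  have hT := d.triangle_mem j X
  obtain ⟨g, hg⟩ := Triangle.coyoneda_exact₁ _ hT ((𝟙 ((d.τle j).obj X))⟦(1 : ℤ)⟧')
    (by show (𝟙 ((d.τle j).obj X))⟦(1 : ℤ)⟧' ≫ ((d.ι j).app X)⟦(1 : ℤ)⟧' = 0
        rw [← Functor.map_comp, id_comp]
        show ((d.ι j).app X)⟦(1 : ℤ)⟧' = 0
        rw [h, Functor.map_zero])
  have hg0 : g = 0 := tzero g (t.le_shift j 1 (j - 1) (by omega) _ (d.τle_mem j X))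
    (d.τge_mem (j + 1) X) (by omega)
  rw [hg0, zero_comp] at hg
  exact (IsZero.iff_id_eq_zero _).2 ((Functor.map_eq_zero_iff _).1 hg)

lemma isZero_tge_of_π_zero (n0 : ℤ) (X : C) (h : (d.π (n0 + 1)).app X = 0) :
    IsZero ((d.τge (n0 + 1)).obj X) := by
  have hT := d.triangle_mem n0 X
  obtain ⟨g, hg⟩ := Triangle.yoneda_exact₃ _ hT (𝟙 ((d.τge (n0 + 1)).obj X))
    (by show (d.π (n0 + 1)).app X ≫ 𝟙 ((d.τge (n0 + 1)).obj X) = 0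
        rw [comp_id]; exact h)
  have hg0 : g = 0 := tzero g (t.le_shift n0 1 (n0 - 1) (by omega) _ (d.τle_mem n0 X))
    (d.τge_mem (n0 + 1) X) (by omega)
  rw [hg0, comp_zero] at hg
  rw [IsZero.iff_id_eq_zero]
  exact hg

lemma ge_of_tle_zero (n0 : ℤ) (X : C) (h : IsZero ((d.τle n0).obj X)) :
    t.ge (n0 + 1) X := by
  have hT := d.triangle_mem n0 X
  have : IsIso ((d.π (n0 + 1)).app X) := (Triangle.isZero₁_iff_isIso₂ _ hT).1 h
  exact ObjectProperty.prop_of_iso (t.ge (n0 + 1)) (asIso ((d.π (n0 + 1)).app X)).symm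
    (d.τge_mem (n0 + 1) X)

lemma le_of_tge_zero (n : ℤ) (X : C) (h : IsZero ((d.τge (n + 1)).obj X)) :
    t.le n X := by
  have hT := d.triangle_mem n X
  have : IsIso ((d.ι n).app X) := (Triangle.isZero₃_iff_isIso₁ _ hT).1 h
  exact ObjectProperty.prop_of_iso (t.le n) (asIso ((d.ι n).app X)) (d.τle_mem n X)

lemma isZero_tle_of_ge {n : ℤ} (j : ℤ) (X : C) (hX : t.ge n X) (hj : j < n) :
    IsZero ((d.τle j).obj X) :=
  isZero_tle_of_ι_zero d j X (tzero _ (d.τle_mem j X) hX hj)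

lemma isZero_tge_of_le {n : ℤ} (i : ℤ) (X : C) (hX : t.le n X) (hi : n < i) :
    IsZero ((d.τge i).obj X) := by
  obtain ⟨n0, rfl⟩ : ∃ n0, i = n0 + 1 := ⟨i - 1, by omega⟩
  exact isZero_tge_of_π_zero d n0 X (tzero _ hX (d.τge_mem (n0 + 1) X) (by omega))

lemma ι_isIso_of_le (n : ℤ) (X : C) (hX : t.le n X) : IsIso ((d.ι n).app X) :=
  (Triangle.isZero₃_iff_isIso₁ _ (d.triangle_mem n X)).1
    (isZero_tge_of_le d (n + 1) X hX (by omega))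

lemma π_isIso_of_ge (n : ℤ) (X : C) (hX : t.ge n X) : IsIso ((d.π n).app X) := by
  obtain ⟨n0, rfl⟩ : ∃ n0, n = n0 + 1 := ⟨n - 1, by omega⟩
  exact (Triangle.isZero₁_iff_isIso₂ _ (d.triangle_mem n0 X)).1
    (isZero_tle_of_ge d n0 X hX (by omega))

include d in
lemma le_ext (T : Triangle C) (hT : T ∈ distTriang C) (n : ℤ)
    (h1 : t.le n T.obj₁) (h3 : t.le n T.obj₃) : t.le n T.obj₂ := by
  apply le_of_tge_zero
  apply isZero_tge_of_π_zero
  obtain ⟨g, hg⟩ := Triangle.yoneda_exact₂ T hT ((d.π (n + 1)).app T.obj₂)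
    (tzero _ h1 (d.τge_mem (n + 1) T.obj₂) (by omega))
  rw [hg, tzero g h3 (d.τge_mem (n + 1) T.obj₂) (by omega), comp_zero]

include d in
lemma ge_ext (T : Triangle C) (hT : T ∈ distTriang C) (n : ℤ)
    (h1 : t.ge n T.obj₁) (h3 : t.ge n T.obj₃) : t.ge n T.obj₂ := by
  have h : (d.ι (n - 1)).app T.obj₂ = 0 := by
    obtain ⟨g, hg⟩ := Triangle.coyoneda_exact₂ T hT ((d.ι (n - 1)).app T.obj₂)
      (tzero _ (d.τle_mem (n - 1) T.obj₂) h3 (by omega))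
    rw [hg, tzero g (d.τle_mem (n - 1) T.obj₂) h1 (by omega), zero_comp]
  have h2 := ge_of_tle_zero d (n - 1) T.obj₂ (isZero_tle_of_ι_zero d (n - 1) T.obj₂ h)
  rwa [show n - 1 + 1 = n by omega] at h2

lemma H_mem_heart (i : ℤ) (X : C) : Heart t ((d.H i).obj X) := by
  have hYge : t.ge i ((d.τge i).obj X) := d.τge_mem i X
  have hZle : t.le i ((d.τle i).obj ((d.τge i).obj X)) := d.τle_mem i ((d.τge i).obj X)
  have hZge : t.ge i ((d.τle i).obj ((d.τge i).obj X)) := by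
    have hT := d.triangle_mem i ((d.τge i).obj X)
    have h : (d.ι (i - 1)).app ((d.τle i).obj ((d.τge i).obj X)) = 0 := by
      obtain ⟨g, hg⟩ := Triangle.coyoneda_exact₁ _ hT
        (((d.ι (i - 1)).app ((d.τle i).obj ((d.τge i).obj X)))⟦(1 : ℤ)⟧')
        (by show ((d.ι (i - 1)).app _)⟦(1 : ℤ)⟧' ≫ ((d.ι i).app _)⟦(1 : ℤ)⟧' = 0
            rw [← Functor.map_comp]
            show ((d.ι (i - 1)).app _ ≫ (d.ι i).app _)⟦(1 : ℤ)⟧' = 0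
            rw [tzero ((d.ι (i - 1)).app _ ≫ (d.ι i).app _)
              (d.τle_mem (i - 1) _) hYge (by omega), Functor.map_zero])
      have hg0 : g = 0 := tzero g
        (t.le_shift (i - 1) 1 (i - 2) (by omega) _ (d.τle_mem (i - 1) _))
        (d.τge_mem (i + 1) _) (by omega)
      rw [hg0, zero_comp] at hg
      exact (Functor.map_eq_zero_iff _).1 hg
    have h2 := ge_of_tle_zero d (i - 1) _ (isZero_tle_of_ι_zero d (i - 1) _ h)
    rwa [show i - 1 + 1 = i by omega] at h2
  exact ⟨t.le_shift i i 0 (by omega) _ hZle, t.ge_shift i i 0 (by omega) _ hZge⟩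

lemma isZero_H_of_le {n : ℤ} (i : ℤ) (X : C) (hX : t.le n X) (hi : n < i) :
    IsZero ((d.H i).obj X) := by
  have h1 : IsZero ((d.τge i).obj X) := isZero_tge_of_le d i X hX hi
  have h2 : IsZero ((d.τle i).obj ((d.τge i).obj X)) :=
    isZero_tle_of_ι_zero d i _ (h1.eq_of_tgt _ _)
  exact (shift_isZero_iff _ i).2 h2

lemma isZero_H_of_ge {n : ℤ} (i : ℤ) (X : C) (hX : t.ge n X) (hi : i < n) :
    IsZero ((d.H i).obj X) := by
  have hiso : IsIso ((d.π i).app X) := π_isIso_of_ge d i X (t.ge_antitone (by omega) _ hX)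
  have h1 : IsZero ((d.τle i).obj X) := isZero_tle_of_ge d i X hX hi
  have h2 : IsZero ((d.τle i).obj ((d.τge i).obj X)) :=
    IsZero.of_iso h1 ((d.τle i).mapIso (asIso ((d.π i).app X)).symm)
  exact (shift_isZero_iff _ i).2 h2

lemma le_pred (n0 : ℤ) (X : C) (hn : t.le (n0 + 1) X)
    (hH : IsZero ((d.H (n0 + 1)).obj X)) : t.le n0 X := by
  have hT := d.triangle_mem n0 X
  have hYle : t.le (n0 + 1) ((d.τge (n0 + 1)).obj X) := by
    refine le_ext d _ (rot_of_distTriang _ hT) (n0 + 1) hn ?_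
    exact t.le_monotone (show n0 - 1 ≤ n0 + 1 by omega) _
      (t.le_shift n0 1 (n0 - 1) (by omega) _ (d.τle_mem n0 X))
  have hiso : IsIso ((d.ι (n0 + 1)).app ((d.τge (n0 + 1)).obj X)) :=
    ι_isIso_of_le d (n0 + 1) _ hYle
  have hZ : IsZero ((d.τle (n0 + 1)).obj ((d.τge (n0 + 1)).obj X)) :=
    (shift_isZero_iff _ (n0 + 1)).1 hH
  have hY : IsZero ((d.τge (n0 + 1)).obj X) :=
    IsZero.of_iso hZ (asIso ((d.ι (n0 + 1)).app ((d.τge (n0 + 1)).obj X))).symm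
  have : IsIso ((d.ι n0).app X) := (Triangle.isZero₃_iff_isIso₁ _ hT).1 hY
  exact ObjectProperty.prop_of_iso (t.le n0) (asIso ((d.ι n0).app X)) (d.τle_mem n0 X)

lemma ge_succ (n0 : ℤ) (X : C) (hn : t.ge n0 X)
    (hH : IsZero ((d.H n0).obj X)) : t.ge (n0 + 1) X := by
  have hiso : IsIso ((d.π n0).app X) := π_isIso_of_ge d n0 X hn
  have hZ : IsZero ((d.τle n0).obj ((d.τge n0).obj X)) :=
    (shift_isZero_iff _ n0).1 hH
  have hZ' : IsZero ((d.τle n0).obj X) :=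
    IsZero.of_iso hZ ((d.τle n0).mapIso (asIso ((d.π n0).app X)))
  exact ge_of_tle_zero d n0 X hZ'

lemma iso_H_zero (X : C) (hX : Heart t X) : Nonempty (X ≅ (d.H 0).obj X) := by
  haveI := π_isIso_of_ge d 0 X hX.2
  have hYle : t.le 0 ((d.τge (0 : ℤ)).obj X) :=
    ObjectProperty.prop_of_iso (t.le 0) (asIso ((d.π (0 : ℤ)).app X)) hX.1
  haveI := ι_isIso_of_le d 0 _ hYle
  exact ⟨asIso ((d.π (0 : ℤ)).app X) ≪≫
    (asIso ((d.ι (0 : ℤ)).app ((d.τge (0 : ℤ)).obj X))).symm ≪≫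
    ((shiftFunctorZero C ℤ).app ((d.τle (0 : ℤ)).obj ((d.τge (0 : ℤ)).obj X))).symm⟩

end Aux


/-- For a tensor reduced monoidal t-structure `t`, one has `H^i(𝟙) = 0` for all
`i ≠ 0`; hence the unit object lies in the heart and `𝟙 ≅ H^0(𝟙)`. -/
theorem statement10 {C : Type*} [Category C] [Preadditive C] [HasZeroObject C] [HasShift C ℤ]
    [∀ n : ℤ, (shiftFunctor C n).Additive] [Pretriangulated C] [MonoidalCategory C]
    [MonoidalTriangulated C] (hC : ∃ X : C, ¬ IsZero X)
    (t : TStructure C) (ht : IsBounded t) (d : TruncData C t) (hd : Kunneth d)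
    (h0 : (0 : ℤ) ∈ dev C t 0) (hred : TensorReduced t) :
    (∀ i : ℤ, i ≠ 0 → IsZero ((d.H i).obj (𝟙_ C))) ∧
    Heart t (𝟙_ C) ∧ Nonempty ((𝟙_ C) ≅ (d.H 0).obj (𝟙_ C)) := by
  classical
  obtain ⟨a, b, hb, ha⟩ := ht (𝟙_ C)
  have key : ∀ m : ℤ, IsZero ((d.H (m + m)).obj (𝟙_ C)) →
      IsZero ((d.H m).obj (𝟙_ C)) := by
    intro m h2m
    obtain ⟨p, ⟨hlim⟩⟩ := hd (m + m) (𝟙_ C) (𝟙_ C)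
    have hA : IsZero ((d.H (m + m)).obj (𝟙_ C ⊗ 𝟙_ C)) :=
      IsZero.of_iso h2m ((d.H (m + m)).mapIso (λ_ (𝟙_ C)))
    set c : Fan (fun q : ℤ => (d.H q).obj (𝟙_ C) ⊗ (d.H (m + m - q)).obj (𝟙_ C)) :=
      Fan.mk ((d.H m).obj (𝟙_ C) ⊗ (d.H (m + m - m)).obj (𝟙_ C))
        (fun q => if h : q = m then eqToHom (by rw [h]) else 0) with hc
    have hu := hlim.fac c ⟨m⟩
    have hl0 : hlim.lift c = 0 := hA.eq_of_tgt _ _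
    rw [hl0, zero_comp, hc] at hu
    simp only [Fan.mk_π_app] at hu
    rw [dif_pos trivial] at hu
    have hFm : IsZero ((d.H m).obj (𝟙_ C) ⊗ (d.H (m + m - m)).obj (𝟙_ C)) := by
      rw [IsZero.iff_id_eq_zero]
      exact (eqToHom_refl _ _).symm.trans hu.symm
    rw [show m + m - m = m by omega] at hFm
    exact hred _ (H_mem_heart d m (𝟙_ C)) hFm
  have part1 : ∀ i : ℤ, i ≠ 0 → IsZero ((d.H i).obj (𝟙_ C)) := by
    intro i hi
    by_contra hnz
    rcases lt_or_gt_of_ne hi with hneg | hpos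
    · obtain ⟨m, hmP, hmin⟩ := Int.exists_least_of_bdd
        (P := fun z => z < 0 ∧ ¬ IsZero ((d.H z).obj (𝟙_ C)))
        ⟨a, fun z hz => by
          by_contra hza
          exact hz.2 (isZero_H_of_ge d z (𝟙_ C) ha (by omega))⟩
        ⟨i, hneg, hnz⟩
      refine hmP.2 (key m ?_)
      by_contra h2
      have := hmin (m + m) ⟨by omega, h2⟩
      omega
    · obtain ⟨m, hmP, hmax⟩ := Int.exists_greatest_of_bdd
        (P := fun z => 0 < z ∧ ¬ IsZero ((d.H z).obj (𝟙_ C)))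
        ⟨b, fun z hz => by
          by_contra hzb
          exact hz.2 (isZero_H_of_le d z (𝟙_ C) hb (by omega))⟩
        ⟨i, hpos, hnz⟩
      refine hmP.2 (key m ?_)
      by_contra h2
      have := hmax (m + m) ⟨by omega, h2⟩
      omega
  have hle0 : t.le 0 (𝟙_ C) := by
    have desc : ∀ k : ℕ, ∀ n : ℤ, n ≤ (k : ℤ) → 0 ≤ n → t.le n (𝟙_ C) → t.le 0 (𝟙_ C) := by
      intro k
      induction k with
      | zero =>
        intro n h1 h2 h3
        obtain rfl : n = 0 := by omega
        exact h3
      | succ k ih =>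
        intro n h1 h2 h3
        rcases eq_or_ne n 0 with rfl | h
        · exact h3
        · have hstep := le_pred d (n - 1) (𝟙_ C)
            (by rw [show n - 1 + 1 = n by omega]; exact h3)
            (by rw [show n - 1 + 1 = n by omega]; exact part1 n h)
          exact ih (n - 1) (by omega) (by omega) hstep
    rcases le_or_gt b 0 with h | h
    · exact t.le_monotone h _ hb
    · exact desc b.toNat b (by omega) (by omega) hb
  have hge0 : t.ge 0 (𝟙_ C) := by
    have asc : ∀ k : ℕ, ∀ n : ℤ, -(k : ℤ) ≤ n → n ≤ 0 → t.ge n (𝟙_ C) → t.ge 0 (𝟙_ C) := by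
      intro k
      induction k with
      | zero =>
        intro n h1 h2 h3
        obtain rfl : n = 0 := by omega
        exact h3
      | succ k ih =>
        intro n h1 h2 h3
        rcases eq_or_ne n 0 with rfl | h
        · exact h3
        · have hstep := ge_succ d n (𝟙_ C) h3 (part1 n h)
          exact ih (n + 1) (by omega) (by omega) hstep
    rcases le_or_gt 0 a with h | h
    · exact t.ge_antitone h _ ha
    · exact asc (-a).toNat a (by omega) (by omega) ha
  have hheart : Heart t (𝟙_ C) := ⟨hle0, hge0⟩
  exact ⟨part1, hheart, iso_H_zero d _ hheart⟩


end Paper
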